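/- Let G be a finite group and Γ a connected simple graph on a finite nonempty vertex set V, with v = card V vertices and l = card(edge set) edges, and suppose v ≤ l. The gauge group of families k : V → G acts on the set of G-configurations on Γ by (k • g)(d) = k(d.fst) * g(d) * (k(d.snd))⁻¹. Then the number of orbits of this action equals the sum over the conjugacy classes C of G of (|G| / |C|)^(l − v). -/

import Mathlib

noncomputable def cnum (G : Type) [Group G] (a b : G) : ℕ := Nat.card {x : G // a * x = x * b}

lemma isConj_of_cnum_ne_zero {G : Type} [Group G] [Finite G] {a b : G}
    (h : cnum G a b ≠ 0) : IsConj a b := by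
  have hne : Nonempty {x : G // a * x = x * b} := (Nat.card_ne_zero.mp h).1
  obtain ⟨x, hx⟩ := hne
  refine isConj_iff.mpr ⟨x⁻¹, ?_⟩
  rw [inv_inv, mul_assoc, hx, ← mul_assoc, inv_mul_cancel, one_mul]

lemma cnum_eq_of_isConj {G : Type} [Group G] {a b : G} (h : IsConj a b) :
    cnum G a b = cnum G a a := by
  obtain ⟨c, hc⟩ := isConj_iff.mp h
  subst hc
  refine Nat.card_congr ((Equiv.mulRight c).subtypeEquiv fun x => ?_)
  simp only [Equiv.coe_mulRight]
  constructor
  · intro h'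
    have h2 : a * x * c = (x * (c * a * c⁻¹)) * c := by rw [h']
    simpa [mul_assoc] using h2
  · intro h'
    have h2 : a * (x * c) * c⁻¹ = (x * c * a) * c⁻¹ := by rw [h']
    simpa [mul_assoc] using h2

lemma card_carrier_mul_cnum {G : Type} [Group G] [Fintype G] (a : G) :
    Nat.card (ConjClasses.mk a).carrier * cnum G a a = Nat.card G := by
  classical
  have h1 := MulAction.card_orbit_mul_card_stabilizer_eq_card_group (ConjAct G) a
  have e1 : MulAction.orbit (ConjAct G) a ≃ (ConjClasses.mk a).carrier := by
    rw [ConjAct.orbit_eq_carrier_conjClasses]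
  have e2 : {x : G // a * x = x * a} ≃ MulAction.stabilizer (ConjAct G) a := by
    refine ⟨fun x => ⟨ConjAct.toConjAct x.1, ?_⟩, fun y => ⟨ConjAct.ofConjAct y.1, ?_⟩, ?_, ?_⟩
    · have := x.2
      rw [MulAction.mem_stabilizer_iff, ConjAct.smul_def, ConjAct.ofConjAct_toConjAct,
        mul_inv_eq_iff_eq_mul]
      rw [← this]
    · have := y.2
      rw [MulAction.mem_stabilizer_iff, ConjAct.smul_def, mul_inv_eq_iff_eq_mul] at this
      rw [← this]
    · intro x; ext; simp
    · intro y; ext; simp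
  rw [cnum, Nat.card_congr e1.symm, Nat.card_congr e2]
  simp only [Nat.card_eq_fintype_card]
  exact h1

lemma cnum_eq_div {G : Type} [Group G] [Fintype G] {a b : G} (h : IsConj a b) :
    cnum G a b = Nat.card G / Nat.card (ConjClasses.mk a).carrier := by
  rw [cnum_eq_of_isConj h, ← card_carrier_mul_cnum a,
    Nat.mul_div_cancel_left _ (Nat.card_pos_iff.mpr ⟨⟨a, ConjClasses.mem_carrier_mk⟩, Set.finite_univ.subset (Set.subset_univ _) |>.to_subtype⟩)]

section Graph

variable {G V : Type} [Group G]

/-- Configurations. -/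
def Conf (G : Type) [Group G] {V : Type} (Γ : SimpleGraph V) : Type :=
  {g : Γ.Dart → G // ∀ d, g d.symm = (g d)⁻¹}

instance confSMul (Γ : SimpleGraph V) : SMul (V → G) (Conf G Γ) :=
  ⟨fun k g => ⟨fun d => k d.fst * g.1 d * (k d.snd)⁻¹, fun d => by
    dsimp only; rw [g.2 d]; simp [SimpleGraph.Dart.symm, mul_assoc]⟩⟩

@[simp] lemma conf_smul_apply (Γ : SimpleGraph V) (k : V → G) (g : Conf G Γ) (d : Γ.Dart) :
    (k • g).1 d = k d.fst * g.1 d * (k d.snd)⁻¹ := rfl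

instance confMulAction (Γ : SimpleGraph V) : MulAction (V → G) (Conf G Γ) where
  one_smul g := Subtype.ext <| funext fun d => by simp
  mul_smul k k' g := Subtype.ext <| funext fun d => by
    simp [Pi.mul_apply, mul_assoc]

variable [LinearOrder V]

/-- Positively oriented darts. -/
abbrev PosDart (Γ : SimpleGraph V) : Type := {d : Γ.Dart // d.fst < d.snd}

lemma inv_conj_aux {H : Type} [Group H] {a b x : H} (h : a * x = x * b) :
    b * x⁻¹ * a⁻¹ = x⁻¹ := by
  have ha : x * b * x⁻¹ = a := by rw [mul_inv_eq_iff_eq_mul, ← h]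
  rw [← ha]; group

lemma card_fixedBy (Γ : SimpleGraph V) [Fintype Γ.Dart] (k : V → G) :
    Nat.card (MulAction.fixedBy (Conf G Γ) k) =
      ∏ d : PosDart Γ, cnum G (k d.1.fst) (k d.1.snd) := by
  have key : ∀ g : Conf G Γ, k • g = g ↔
      ∀ d : Γ.Dart, k d.fst * g.1 d * (k d.snd)⁻¹ = g.1 d := by
    intro g
    refine Subtype.ext_iff.trans (funext_iff.trans ?_)
    exact Iff.rfl
  have E : MulAction.fixedBy (Conf G Γ) k ≃
      ∀ d : PosDart Γ, {x : G // k d.1.fst * x = x * k d.1.snd} := by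
    refine
      { toFun := fun g d => ⟨g.1.1 d.1, ?_⟩
        invFun := fun h => ⟨⟨fun d => if hd : d.fst < d.snd then (h ⟨d, hd⟩).1
            else ((h ⟨d.symm, ?_⟩).1)⁻¹, ?_⟩, ?_⟩
        left_inv := ?_
        right_inv := ?_ }
    · have := (key g.1).1 g.2 d.1
      rwa [mul_inv_eq_iff_eq_mul] at this
    · exact (not_lt.mp hd).lt_of_ne d.snd_ne_fst
    · -- symm property
      intro d
      by_cases hd : d.fst < d.snd
      · have hnd : ¬ d.symm.fst < d.symm.snd := not_lt.mpr (le_of_lt hd)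
        beta_reduce
        rw [dif_pos hd, dif_neg hnd]
        exact congrArg (fun z => ((h z : G))⁻¹) (Subtype.ext (SimpleGraph.Dart.symm_symm d))
      · have hnd : d.symm.fst < d.symm.snd := (not_lt.mp hd).lt_of_ne d.snd_ne_fst
        beta_reduce
        rw [dif_neg hd, dif_pos hnd, inv_inv]
    · -- fixed property
      refine (MulAction.mem_fixedBy.trans (key _)).2 ?_
      intro d
      dsimp only
      by_cases hd : d.fst < d.snd
      · rw [dif_pos hd, mul_inv_eq_iff_eq_mul]
        exact (h ⟨d, hd⟩).2
      · have hnd : d.symm.fst < d.symm.snd := (not_lt.mp hd).lt_of_ne d.snd_ne_fst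
        rw [dif_neg hd]
        exact inv_conj_aux (h ⟨d.symm, hnd⟩).2
    · intro g
      refine Subtype.ext (Subtype.ext (funext fun d => ?_))
      by_cases hd : d.fst < d.snd
      · simp only [dif_pos hd]
      · simp only [dif_neg hd]
        rw [g.1.2 d, inv_inv]
    · intro h
      funext d
      refine Subtype.ext ?_
      simp only [dif_pos d.2]
  rw [Nat.card_congr E, Nat.card_pi]
  rfl

lemma card_posDart (Γ : SimpleGraph V) [Fintype Γ.Dart] :
    Nat.card (PosDart Γ) = Nat.card Γ.edgeSet := by
  refine Nat.card_congr (Equiv.ofBijective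
    (fun d => (⟨d.1.edge, d.1.edge_mem⟩ : Γ.edgeSet)) ⟨?_, ?_⟩)
  · rintro ⟨d₁, h₁⟩ ⟨d₂, h₂⟩ h
    simp only [Subtype.mk.injEq] at h
    rcases (SimpleGraph.dart_edge_eq_iff d₁ d₂).mp h with rfl | rfl
    · rfl
    · exact absurd h₁ (asymm h₂)
  · rintro ⟨e, he⟩
    induction e using Sym2.ind with
    | _ a b =>
      have hab : Γ.Adj a b := he
      rcases lt_or_gt_of_ne hab.ne with hlt | hgt
      · exact ⟨⟨⟨(a, b), hab⟩, hlt⟩, rfl⟩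
      · exact ⟨⟨⟨(b, a), hab.symm⟩, hgt⟩, Subtype.ext Sym2.eq_swap⟩

lemma classes_eq_of_prod_ne_zero [Finite G] {Γ : SimpleGraph V} [Fintype Γ.Dart]
    (hconn : Γ.Connected) {k : V → G}
    (h : ∏ d : PosDart Γ, cnum G (k d.1.fst) (k d.1.snd) ≠ 0) (u w : V) :
    ConjClasses.mk (k u) = ConjClasses.mk (k w) := by
  have hadj : ∀ a b, Γ.Adj a b → ConjClasses.mk (k a) = ConjClasses.mk (k b) := by
    intro a b hab
    rw [ConjClasses.mk_eq_mk_iff_isConj]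
    rcases lt_or_gt_of_ne hab.ne with hlt | hgt
    · exact isConj_of_cnum_ne_zero
        (Finset.prod_ne_zero_iff.mp h ⟨⟨(a, b), hab⟩, hlt⟩ (Finset.mem_univ _))
    · exact (isConj_of_cnum_ne_zero
        (Finset.prod_ne_zero_iff.mp h ⟨⟨(b, a), hab.symm⟩, hgt⟩ (Finset.mem_univ _))).symm
  obtain ⟨p⟩ := hconn.preconnected u w
  induction p with
  | nil => rfl
  | cons h' p ih => exact (hadj _ _ h').trans ih

end Graph

lemma sum_prod_cnum {G V : Type} [Group G] [Fintype G] [DecidableEq G] [Fintype V] [Nonempty V]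
    [LinearOrder V] (Γ : SimpleGraph V) [Fintype Γ.Dart] (hconn : Γ.Connected) :
    ∑ k : V → G, ∏ d : PosDart Γ, cnum G (k d.1.fst) (k d.1.snd) =
      ∑ C : ConjClasses G,
        Nat.card C.carrier ^ Fintype.card V *
          (Nat.card G / Nat.card C.carrier) ^ Nat.card Γ.edgeSet := by
  classical
  set v0 : V := Classical.arbitrary V
  rw [← Finset.sum_fiberwise Finset.univ (fun k : V → G => ConjClasses.mk (k v0))
    (fun k => ∏ d : PosDart Γ, cnum G (k d.1.fst) (k d.1.snd))]
  refine Finset.sum_congr rfl fun C _ => ?_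
  have hsub : (Finset.univ.filter fun k : V → G => ∀ u, ConjClasses.mk (k u) = C) ⊆
      (Finset.univ.filter fun k : V → G => ConjClasses.mk (k v0) = C) := by
    intro k hk
    simp only [Finset.mem_filter, Finset.mem_univ, true_and] at hk ⊢
    exact hk v0
  rw [← Finset.sum_subset hsub ?hzero]
  case hzero =>
    intro k hk hk2
    simp only [Finset.mem_filter, Finset.mem_univ, true_and] at hk hk2
    by_contra hF
    exact hk2 fun u => (classes_eq_of_prod_ne_zero hconn hF u v0).trans hk
  have hcard : (Finset.univ.filter fun k : V → G => ∀ u, ConjClasses.mk (k u) = C).card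
      = Nat.card C.carrier ^ Fintype.card V := by
    have e : {k : V → G // ∀ u, ConjClasses.mk (k u) = C} ≃ (V → C.carrier) :=
      { toFun := fun k u => ⟨k.1 u, ConjClasses.mem_carrier_iff_mk_eq.mpr (k.2 u)⟩
        invFun := fun f => ⟨fun u => (f u).1, fun u =>
          ConjClasses.mem_carrier_iff_mk_eq.mp (f u).2⟩
        left_inv := fun k => rfl
        right_inv := fun f => rfl }
    rw [← Fintype.card_subtype, ← Nat.card_eq_fintype_card, Nat.card_congr e, Nat.card_fun,
      Nat.card_eq_fintype_card (α := V)]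
  rw [Finset.sum_congr rfl (g := fun _ => (Nat.card G / Nat.card C.carrier) ^ Nat.card Γ.edgeSet)
    (fun k hk => ?term), Finset.sum_const, hcard, smul_eq_mul]
  case term =>
    simp only [Finset.mem_filter, Finset.mem_univ, true_and] at hk
    have : ∀ d : PosDart Γ, cnum G (k d.1.fst) (k d.1.snd)
        = Nat.card G / Nat.card C.carrier := by
      intro d
      have h1 := hk d.1.fst
      have h2 := hk d.1.snd
      have hc : IsConj (k d.1.fst) (k d.1.snd) :=
        ConjClasses.mk_eq_mk_iff_isConj.mp (h1.trans h2.symm)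
      rw [cnum_eq_div hc, h1]
    rw [Finset.prod_congr rfl fun d _ => this d, Finset.prod_const, Finset.card_univ,
      ← Nat.card_eq_fintype_card, card_posDart]


/-- Let `G` be a finite group and `Γ` a connected simple graph on a finite
nonempty vertex set with `v` vertices and `l ≥ v` edges. Gauge transformations `k : V → G`
act on `G`-configurations (functions on darts with `g d.symm = (g d)⁻¹`) by
`(k • g) d = k d.fst * g d * (k d.snd)⁻¹`. The number of gauge orbits equals
`∑_{conjugacy classes C} (|G| / |C|) ^ (l - v)`. -/
theorem card_gauge_orbits
    {G V : Type} [Group G] [Fintype G] [DecidableEq G] [Fintype V] [Nonempty V]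
    (Γ : SimpleGraph V) (hconn : Γ.Connected)
    (v l : ℕ) (hv : v = Fintype.card V) (hl : l = Nat.card Γ.edgeSet) (hvl : v ≤ l) :
    Nat.card (Quot (fun g g' : {g : Γ.Dart → G // ∀ d, g d.symm = (g d)⁻¹} =>
        ∃ k : V → G, ∀ d : Γ.Dart, g'.1 d = k d.fst * g.1 d * (k d.snd)⁻¹)) =
      ∑ C : ConjClasses G, (Nat.card G / Nat.card C.carrier) ^ (l - v) := by
  classical
  subst hv hl
  letI : LinearOrder V := LinearOrder.lift' (Fintype.equivFin V) (Fintype.equivFin V).injective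
  letI : Fintype Γ.Dart := SimpleGraph.Dart.fintype
  set n := Fintype.card V with hn
  set l := Nat.card Γ.edgeSet with hl
  -- identify the quotient with the orbit space
  have h1 : ∀ g g' : Conf G Γ,
      (∃ k : V → G, ∀ d : Γ.Dart, g'.1 d = k d.fst * g.1 d * (k d.snd)⁻¹) ↔
        g' ∈ MulAction.orbit (V → G) g := by
    intro g g'
    rw [MulAction.mem_orbit_iff]
    constructor
    · rintro ⟨k, hk⟩; exact ⟨k, Subtype.ext (funext fun d => (hk d).symm)⟩
    · rintro ⟨k, rfl⟩; exact ⟨k, fun d => rfl⟩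
  have e : Quot (fun g g' : {g : Γ.Dart → G // ∀ d, g d.symm = (g d)⁻¹} =>
        ∃ k : V → G, ∀ d : Γ.Dart, g'.1 d = k d.fst * g.1 d * (k d.snd)⁻¹) ≃
      Quotient (MulAction.orbitRel (V → G) (Conf G Γ)) := by
    refine Quot.congrRight fun g g' => ?_
    refine (h1 g g').trans ?_
    show _ ↔ MulAction.orbitRel (V → G) (Conf G Γ) g g'
    exact (MulAction.orbitRel_apply.trans MulAction.mem_orbit_symm).symm
  rw [Nat.card_congr e]
  -- Burnside
  letI : Fintype (Conf G Γ) := by unfold Conf; infer_instance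
  letI : ∀ k : V → G, Fintype (MulAction.fixedBy (Conf G Γ) k) := fun k => Fintype.ofFinite _
  letI : Fintype (Quotient (MulAction.orbitRel (V → G) (Conf G Γ))) := Fintype.ofFinite _
  have hb := MulAction.sum_card_fixedBy_eq_card_orbits_mul_card_group (V → G) (Conf G Γ)
  simp only [← Nat.card_eq_fintype_card] at hb
  rw [Finset.sum_congr rfl (fun k _ => card_fixedBy Γ k), sum_prod_cnum Γ hconn,
    Nat.card_fun, Nat.card_eq_fintype_card (α := V)] at hb
  -- per-class arithmetic
  have hC : ∀ C : ConjClasses G,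
      Nat.card C.carrier ^ n * (Nat.card G / Nat.card C.carrier) ^ l
        = (Nat.card G / Nat.card C.carrier) ^ (l - n) * Nat.card G ^ n := by
    intro C
    obtain ⟨a, rfl⟩ := ConjClasses.exists_rep C
    have hdvd : Nat.card (ConjClasses.mk a).carrier ∣ Nat.card G :=
      ⟨cnum G a a, (card_carrier_mul_cnum a).symm⟩
    have hmul : Nat.card (ConjClasses.mk a).carrier *
        (Nat.card G / Nat.card (ConjClasses.mk a).carrier) = Nat.card G :=
      Nat.mul_div_cancel' hdvd
    calc Nat.card (ConjClasses.mk a).carrier ^ n *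
          (Nat.card G / Nat.card (ConjClasses.mk a).carrier) ^ l
        = (Nat.card (ConjClasses.mk a).carrier *
            (Nat.card G / Nat.card (ConjClasses.mk a).carrier)) ^ n *
          (Nat.card G / Nat.card (ConjClasses.mk a).carrier) ^ (l - n) := by
          rw [mul_pow, mul_assoc, ← pow_add, Nat.add_sub_cancel' hvl]
      _ = (Nat.card G / Nat.card (ConjClasses.mk a).carrier) ^ (l - n) * Nat.card G ^ n := by
          rw [hmul, mul_comm]
  rw [Finset.sum_congr rfl (fun C _ => hC C), ← Finset.sum_mul] at hb
  have hpos : 0 < Nat.card G ^ n := by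
    have : 0 < Nat.card G := Nat.card_pos
    positivity
  exact Nat.eq_of_mul_eq_mul_right hpos (by rw [← hb, mul_comm])
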